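/- Let m, c, d, e, a > 0 and p ∈ [0,1], and suppose 0 < e/d − a < 1. Set x* = e/d − a, y* = (1/m)·(1 − e/d + a)·((e/d − a)^p + c), and μ = min{m, e}. Assume μ < d·x*/(x*^p + c) and d − e/(x* + a) < (d/m)·(x*/y*)². Then every pair of differentiable functions x, y : [0, ∞) → ℝ with x(0) > 0, y(0) > 0 that remains positive and satisfies x'(t) = x(t)(1 − x(t)) − m·x(t)·y(t)/(x(t)^p + c) and y'(t) = (d − e/(x(t) + a))·y(t)² for all t ≥ 0 is bounded: there exists M > 0 such that x(t) ≤ M and y(t) ≤ M for all t ≥ 0. -/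

import Mathlib

open Set

lemma monoOn_of_hasDerivAt {f f' : ℝ → ℝ} {a b : ℝ}
    (hf : ∀ t ∈ Set.Icc a b, HasDerivAt f (f' t) t)
    (h0 : ∀ t ∈ Set.Ioo a b, 0 ≤ f' t) : MonotoneOn f (Set.Icc a b) := by
  apply monotoneOn_of_deriv_nonneg (convex_Icc a b)
  · exact fun t ht => (hf t ht).continuousAt.continuousWithinAt
  · intro t ht
    rw [interior_Icc] at ht
    exact ((hf t (Ioo_subset_Icc_self ht)).differentiableAt).differentiableWithinAt
  · intro t ht
    rw [interior_Icc] at ht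
    rw [(hf t (Ioo_subset_Icc_self ht)).deriv]
    exact h0 t ht

lemma antiOn_of_hasDerivAt {f f' : ℝ → ℝ} {a b : ℝ}
    (hf : ∀ t ∈ Set.Icc a b, HasDerivAt f (f' t) t)
    (h0 : ∀ t ∈ Set.Ioo a b, f' t < 0) : StrictAntiOn f (Set.Icc a b) := by
  apply strictAntiOn_of_deriv_neg (convex_Icc a b)
  · exact fun t ht => (hf t ht).continuousAt.continuousWithinAt
  · intro t ht
    rw [interior_Icc] at ht
    rw [(hf t (Ioo_subset_Icc_self ht)).deriv]
    exact h0 t ht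

lemma barrier {f f' : ℝ → ℝ} {B : ℝ}
    (hf : ∀ t ≥ (0:ℝ), HasDerivAt f (f' t) t)
    (h0 : f 0 ≤ B) (hneg : ∀ t ≥ (0:ℝ), B ≤ f t → f' t < 0) :
    ∀ t ≥ (0:ℝ), f t ≤ B := by
  intro t₁ ht₁
  by_contra hgt
  push_neg at hgt
  have hS : IsClosed {t | t ∈ Set.Icc 0 t₁ ∧ f t ≤ B} := by
    have hcont : ContinuousOn f (Set.Icc 0 t₁) :=
      fun t ht => (hf t ht.1).continuousAt.continuousWithinAt
    exact hcont.preimage_isClosed_of_isClosed isClosed_Icc isClosed_Iic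
  have hne : ({t | t ∈ Set.Icc 0 t₁ ∧ f t ≤ B}).Nonempty := ⟨0, ⟨le_refl 0, ht₁⟩, h0⟩
  have hbdd : BddAbove {t | t ∈ Set.Icc 0 t₁ ∧ f t ≤ B} := ⟨t₁, fun t ht => ht.1.2⟩
  set s := sSup {t | t ∈ Set.Icc 0 t₁ ∧ f t ≤ B} with hs
  have hsmem : s ∈ {t | t ∈ Set.Icc 0 t₁ ∧ f t ≤ B} := hS.csSup_mem hne hbdd
  have hs0 : 0 ≤ s := hsmem.1.1
  have hst : s ≤ t₁ := hsmem.1.2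
  have hsne : s ≠ t₁ := fun h => absurd hsmem.2 (by rw [h]; exact not_le.2 hgt)
  have hslt : s < t₁ := lt_of_le_of_ne hst hsne
  have hafter : ∀ t, s < t → t ≤ t₁ → B < f t := by
    intro t h1 h2
    by_contra hb
    push_neg at hb
    exact absurd (le_csSup hbdd ⟨⟨hs0.trans h1.le, h2⟩, hb⟩) (not_le.2 h1)
  have hanti : StrictAntiOn f (Set.Icc s t₁) := by
    apply antiOn_of_hasDerivAt
    · exact fun t ht => hf t (hs0.trans ht.1)
    · intro t ht
      exact hneg t (hs0.trans ht.1.le) (hafter t ht.1 ht.2.le).le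
  have := hanti (Set.left_mem_Icc.2 hst) (Set.right_mem_Icc.2 hst) hslt
  linarith [hsmem.2]

set_option maxHeartbeats 1000000 in
/-- Boundedness of positive solutions of the Hassell–Varley predator–prey system
under the conditions `μ < d x*/(x*^p + c)` and `d − e/(x*+a) < (d/m)(x*/y*)²`,
where `(x*, y*)` is the interior equilibrium and `μ = min{m, e}`. -/
theorem boundedness_of_solutions
    (m c d e a p : ℝ) (hm : 0 < m) (hc : 0 < c) (hd : 0 < d) (he : 0 < e)
    (ha : 0 < a) (hp : p ∈ Set.Icc (0 : ℝ) 1)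
    (hxs0 : 0 < e / d - a) (hxs1 : e / d - a < 1)
    (hμ : min m e <
      d * (e / d - a) / ((e / d - a) ^ p + c))
    (hcond : d - e / ((e / d - a) + a) <
      (d / m) * ((e / d - a) /
        ((1 / m) * (1 - e / d + a) * ((e / d - a) ^ p + c))) ^ 2)
    (x y : ℝ → ℝ) (hx0 : 0 < x 0) (hy0 : 0 < y 0)
    (hxpos : ∀ t ≥ (0 : ℝ), 0 < x t) (hypos : ∀ t ≥ (0 : ℝ), 0 < y t)
    (hx : ∀ t ≥ (0 : ℝ),
      HasDerivAt x (x t * (1 - x t) - m * x t * y t / (x t ^ p + c)) t)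
    (hy : ∀ t ≥ (0 : ℝ),
      HasDerivAt y ((d - e / (x t + a)) * y t ^ 2) t) :
    ∃ M > (0 : ℝ), ∀ t ≥ (0 : ℝ), x t ≤ M ∧ y t ≤ M := by
  -- notation
  set B : ℝ := max (x 0) 1 with hBdef
  have hB1 : (1:ℝ) ≤ B := le_max_right _ _
  have hBpos : (0:ℝ) < B := lt_of_lt_of_le one_pos hB1
  -- denominators are positive
  have hden : ∀ t ≥ (0:ℝ), 0 < x t ^ p + c := by
    intro t ht
    have := Real.rpow_pos_of_pos (hxpos t ht) p
    linarith
  -- x is bounded by B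
  have hxB : ∀ t ≥ (0:ℝ), x t ≤ B := by
    apply barrier hx (le_max_left _ _)
    intro t ht hBle
    have hx1 : (1:ℝ) ≤ x t := le_trans hB1 hBle
    have h1 : x t * (1 - x t) ≤ 0 := mul_nonpos_of_nonneg_of_nonpos (by linarith) (by linarith)
    have h2 : 0 < m * x t * y t / (x t ^ p + c) :=
      div_pos (by have := hxpos t ht; have := hypos t ht; positivity) (hden t ht)
    linarith
  -- x^p bounded
  have hpow : ∀ t ≥ (0:ℝ), x t ^ p ≤ B := by
    intro t ht
    rcases le_or_gt (x t) 1 with h | h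
    · exact le_trans (Real.rpow_le_one (hxpos t ht).le h hp.1) hB1
    · calc x t ^ p ≤ x t ^ (1:ℝ) := Real.rpow_le_rpow_of_exponent_le h.le hp.2
        _ = x t := Real.rpow_one _
        _ ≤ B := hxB t ht
  -- the reciprocal of y
  set z : ℝ → ℝ := fun t => (y t)⁻¹ with hzdef
  have hzpos : ∀ t ≥ (0:ℝ), 0 < z t := fun t ht => inv_pos.2 (hypos t ht)
  have hz : ∀ t ≥ (0:ℝ), HasDerivAt z (e / (x t + a) - d) t := by
    intro t ht
    have h := (hy t ht).inv (ne_of_gt (hypos t ht))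
    refine h.congr_deriv ?_
    have hyne : y t ≠ 0 := ne_of_gt (hypos t ht)
    rw [div_eq_iff (pow_ne_zero 2 hyne)]
    ring
  -- constants
  set x₁ : ℝ := (e / d - a) / 2 with hx₁def
  have hx₁pos : 0 < x₁ := by positivity
  have hx₁lt : x₁ < e / d - a := by linarith
  -- whenever x t < x₁, z is increasing
  have hzup : ∀ t ≥ (0:ℝ), x t < x₁ → 0 < e / (x t + a) - d := by
    intro t ht hlt
    have hxa : 0 < x t + a := by have := hxpos t ht; linarith
    have h1 : x t + a < e / d := by linarith
    have h2 : d * (x t + a) < d * (e / d) := by exact mul_lt_mul_of_pos_left h1 hd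
    have h3 : d * (e / d) = e := by field_simp
    rw [sub_pos, lt_div_iff₀ hxa]
    linarith
  set γ : ℝ := 4 * (B + c) * d / m with hγdef
  have hγpos : 0 < γ := by positivity
  set ε₀ : ℝ := m / (4 * (B + c)) with hε₀def
  have hε₀pos : 0 < ε₀ := by positivity
  set ε₂ : ℝ := min ε₀ ((y 0)⁻¹) with hε₂def
  have hε₂pos : 0 < ε₂ := lt_min hε₀pos (inv_pos.2 hy0)
  set ε₁ : ℝ := ε₂ * (x₁ / B) ^ γ with hε₁def
  have hratpos : 0 < (x₁ / B) ^ γ := Real.rpow_pos_of_pos (by positivity) γ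
  have hε₁pos : 0 < ε₁ := mul_pos hε₂pos hratpos
  have hε₁le : ε₁ ≤ ε₂ := by
    have hr1 : (x₁ / B) ^ γ ≤ 1 :=
      Real.rpow_le_one (by positivity) (by
        rw [div_le_one hBpos]; linarith) hγpos.le
    nlinarith
  -- the key lower bound on z
  have key : ∀ t ≥ (0:ℝ), ε₁ ≤ z t := by
    intro t₁ ht₁
    by_contra hgt
    push_neg at hgt
    -- the set of times before t₁ where z is still at least ε₂
    have hScl : IsClosed {t | t ∈ Set.Icc 0 t₁ ∧ ε₂ ≤ z t} := by
      have hcont : ContinuousOn z (Set.Icc 0 t₁) :=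
        fun t ht => (hz t ht.1).continuousAt.continuousWithinAt
      exact hcont.preimage_isClosed_of_isClosed isClosed_Icc isClosed_Ici
    have hSne : ({t | t ∈ Set.Icc 0 t₁ ∧ ε₂ ≤ z t}).Nonempty :=
      ⟨0, ⟨le_refl 0, ht₁⟩, min_le_right _ _⟩
    have hSbdd : BddAbove {t | t ∈ Set.Icc 0 t₁ ∧ ε₂ ≤ z t} := ⟨t₁, fun t ht => ht.1.2⟩
    set s := sSup {t | t ∈ Set.Icc 0 t₁ ∧ ε₂ ≤ z t} with hsdef
    have hsmem : s ∈ {t | t ∈ Set.Icc 0 t₁ ∧ ε₂ ≤ z t} := hScl.csSup_mem hSne hSbdd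
    have hs0 : (0:ℝ) ≤ s := hsmem.1.1
    have hst : s ≤ t₁ := hsmem.1.2
    have hzs : ε₂ ≤ z s := hsmem.2
    have hafter : ∀ t, s < t → t ≤ t₁ → z t < ε₂ := by
      intro t h1 h2
      by_contra hb
      push_neg at hb
      exact absurd (le_csSup hSbdd ⟨⟨hs0.trans h1.le, h2⟩, hb⟩) (not_le.2 h1)
    -- split according to whether x ever exceeds x₁ on [s, t₁]
    by_cases hT : ({t | t ∈ Set.Icc s t₁ ∧ x₁ ≤ x t}).Nonempty
    · -- u : last time in [s,t₁] with x ≥ x₁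
      have hTcl : IsClosed {t | t ∈ Set.Icc s t₁ ∧ x₁ ≤ x t} := by
        have hcont : ContinuousOn x (Set.Icc s t₁) :=
          fun t ht => (hx t (hs0.trans ht.1)).continuousAt.continuousWithinAt
        exact hcont.preimage_isClosed_of_isClosed isClosed_Icc isClosed_Ici
      have hTbdd : BddAbove {t | t ∈ Set.Icc s t₁ ∧ x₁ ≤ x t} := ⟨t₁, fun t ht => ht.1.2⟩
      set u := sSup {t | t ∈ Set.Icc s t₁ ∧ x₁ ≤ x t} with hudef
      have humem : u ∈ {t | t ∈ Set.Icc s t₁ ∧ x₁ ≤ x t} := hTcl.csSup_mem hT hTbdd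
      have hsu : s ≤ u := humem.1.1
      have hut : u ≤ t₁ := humem.1.2
      have hu0 : (0:ℝ) ≤ u := hs0.trans hsu
      have hxu : x₁ ≤ x u := humem.2
      have hxafter : ∀ t, u < t → t ≤ t₁ → x t < x₁ := by
        intro t h1 h2
        by_contra hb
        push_neg at hb
        exact absurd (le_csSup hTbdd ⟨⟨hsu.trans h1.le, h2⟩, hb⟩) (not_le.2 h1)
      -- z is monotone on [u, t₁]
      have hzmono : MonotoneOn z (Set.Icc u t₁) := by
        apply monoOn_of_hasDerivAt (f' := fun t => e / (x t + a) - d)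
        · exact fun t ht => hz t (hu0.trans ht.1)
        · intro t ht
          exact (hzup t (hu0.trans ht.1.le) (hxafter t ht.1 ht.2.le)).le
      have hz_t₁_u : z u ≤ z t₁ :=
        hzmono (Set.left_mem_Icc.2 hut) (Set.right_mem_Icc.2 hut) hut
      -- the Lyapunov-type function G is monotone on [s, u]
      set G : ℝ → ℝ := fun t => Real.log (z t) - γ * Real.log (x t) with hGdef
      have hGmono : MonotoneOn G (Set.Icc s u) := by
        apply monoOn_of_hasDerivAt
          (f' := fun t => (e / (x t + a) - d) / z t -
            γ * ((x t * (1 - x t) - m * x t * y t / (x t ^ p + c)) / x t))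
        · intro t ht
          have ht0 : (0:ℝ) ≤ t := hs0.trans ht.1
          exact ((hz t ht0).log (ne_of_gt (hzpos t ht0))).sub
            (((hx t ht0).log (ne_of_gt (hxpos t ht0))).const_mul γ)
        · intro t ht
          have ht0 : (0:ℝ) ≤ t := hs0.trans ht.1.le
          have hyt : 0 < y t := hypos t ht0
          have hxt : 0 < x t := hxpos t ht0
          have hDt : 0 < x t ^ p + c := hden t ht0
          have hDtB : x t ^ p + c ≤ B + c := by have := hpow t ht0; linarith
          have hztlt : z t < ε₂ := hafter t ht.1 (ht.2.le.trans hut)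
          have hztε₀ : (y t)⁻¹ ≤ ε₀ := le_trans hztlt.le (min_le_left _ _)
          -- y t is large
          have hylarge : 4 * (B + c) ≤ m * y t := by
            have h1 : ε₀⁻¹ ≤ y t := by
              have := inv_anti₀ (inv_pos.2 hyt) hztε₀
              rwa [inv_inv] at this
            have h2 : ε₀⁻¹ = 4 * (B + c) / m := by
              rw [hε₀def]; field_simp
            rw [h2, div_le_iff₀ hm] at h1
            linarith
          have e1 : (e / (x t + a) - d) / z t = (e / (x t + a) - d) * y t := by
            simp only [hzdef]; rw [div_eq_mul_inv, inv_inv]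
          have e2 : (x t * (1 - x t) - m * x t * y t / (x t ^ p + c)) / x t =
              1 - x t - m * y t / (x t ^ p + c) := by
            field_simp
          simp only [e1, e2]
          have hQ : m * y t / (B + c) ≤ m * y t / (x t ^ p + c) :=
            div_le_div_of_nonneg_left (by positivity) hDt hDtB
          have hγQ : γ * (m * y t / (B + c)) ≤ γ * (m * y t / (x t ^ p + c)) :=
            mul_le_mul_of_nonneg_left hQ hγpos.le
          have hγval : γ * (m * y t / (B + c)) = 4 * d * y t := by
            rw [hγdef]; field_simp
          have hγm : γ * m = 4 * (B + c) * d := by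
            rw [hγdef]; field_simp
          have hdyγ : γ ≤ d * y t := by
            have h1 : γ * m ≤ (d * y t) * m := by
              rw [hγm]
              nlinarith only [hylarge, hd.le]
            exact le_of_mul_le_mul_right h1 hm
          have hE : 0 ≤ e / (x t + a) * y t := by
            have : 0 < x t + a := by linarith
            positivity
          have hγx : 0 ≤ γ * x t := by positivity
          linarith only [hγQ, hγval, hdyγ, hE, hγx, hγpos.le]
      have hGsu : G s ≤ G u := hGmono (Set.left_mem_Icc.2 hsu) (Set.right_mem_Icc.2 hsu) hsu
      -- extract the lower bound z u ≥ ε₁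
      have hzu_pos : 0 < z u := hzpos u hu0
      have hxs_pos : 0 < x s := hxpos s hs0
      have hxu_pos : 0 < x u := hxpos u hu0
      have hlog1 : Real.log ε₂ ≤ Real.log (z s) := Real.log_le_log hε₂pos hzs
      have hlog2 : Real.log x₁ ≤ Real.log (x u) := Real.log_le_log hx₁pos hxu
      have hlog3 : Real.log (x s) ≤ Real.log B := Real.log_le_log hxs_pos (hxB s hs0)
      have hlogε₁ : Real.log ε₁ = Real.log ε₂ + γ * (Real.log x₁ - Real.log B) := by
        rw [hε₁def, Real.log_mul (ne_of_gt hε₂pos) (ne_of_gt hratpos),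
          Real.log_rpow (by positivity), Real.log_div (ne_of_gt hx₁pos) (ne_of_gt hBpos)]
      have hfinal : Real.log ε₁ ≤ Real.log (z u) := by
        have h1 : γ * Real.log x₁ ≤ γ * Real.log (x u) :=
          mul_le_mul_of_nonneg_left hlog2 hγpos.le
        have h2 : γ * Real.log (x s) ≤ γ * Real.log B :=
          mul_le_mul_of_nonneg_left hlog3 hγpos.le
        simp only [hGdef] at hGsu
        rw [hlogε₁]
        linarith
      have hzu : ε₁ ≤ z u := by
        rwa [Real.log_le_log_iff hε₁pos hzu_pos] at hfinal
      linarith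
    · -- x < x₁ throughout [s, t₁]; z is monotone there
      have hxsmall : ∀ t ∈ Set.Icc s t₁, x t < x₁ := by
        intro t ht
        by_contra hb
        push_neg at hb
        exact hT ⟨t, ht, hb⟩
      have hzmono : MonotoneOn z (Set.Icc s t₁) := by
        apply monoOn_of_hasDerivAt (f' := fun t => e / (x t + a) - d)
        · exact fun t ht => hz t (hs0.trans ht.1)
        · intro t ht
          exact (hzup t (hs0.trans ht.1.le) (hxsmall t (Set.Ioo_subset_Icc_self ht))).le
      have := hzmono (Set.left_mem_Icc.2 hst) (Set.right_mem_Icc.2 hst) hst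
      linarith
  -- conclusion
  refine ⟨max B ε₁⁻¹, lt_of_lt_of_le hBpos (le_max_left _ _), fun t ht => ?_⟩
  constructor
  · exact le_trans (hxB t ht) (le_max_left _ _)
  · have h1 : ε₁ ≤ (y t)⁻¹ := key t ht
    have h2 : y t ≤ ε₁⁻¹ := by
      rw [← inv_inv (y t)]
      exact inv_anti₀ hε₁pos h1
    exact le_trans h2 (le_max_right _ _)
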